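/- Fix an integer d ≥ 1, a real number t > 0 and a > 0. Then for every λ ∈ ℂ with |Im λ| ≤ a and λ ≠ ia, λ ≠ −ia, one has |ψ_λ(t e₁)| < ψ_{ia}(t e₁). (Note that ψ_{ia}(t e₁) = |B(0,1)|^{-1} ∫_{B(0,1)} e^{a t e₁·y} dy is a positive real number.) -/

import Mathlib

open MeasureTheory Complex
open scoped ENNReal

noncomputable abbrev Bd (d : ℕ) := Metric.ball (0 : EuclideanSpace ℝ (Fin d)) 1

theorem slice_null (d : ℕ) (i : Fin d) (s : ℝ) :
    volume {y : EuclideanSpace ℝ (Fin d) | y i = s} = 0 := by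
  set φ := (EuclideanSpace.proj (𝕜 := ℝ) i).toLinearMap with hφ
  set v : EuclideanSpace ℝ (Fin d) := EuclideanSpace.single i s with hv
  have hker : LinearMap.ker φ ≠ ⊤ := by
    intro h
    have : φ (EuclideanSpace.single i 1) = 0 := by
      rw [← LinearMap.mem_ker, h]; trivial
    simp [hφ] at this
  have hsub : volume (LinearMap.ker φ : Set (EuclideanSpace ℝ (Fin d))) = 0 :=
    Measure.addHaar_submodule _ _ hker
  have heq : {y : EuclideanSpace ℝ (Fin d) | y i = s}
      = (fun y => y + (-v)) ⁻¹' (LinearMap.ker φ : Set (EuclideanSpace ℝ (Fin d))) := by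
    ext y
    simp only [Set.mem_setOf_eq, Set.mem_preimage, SetLike.mem_coe, LinearMap.mem_ker, hφ,
      ContinuousLinearMap.coe_coe]
    show y i = s ↔ (y + -v) i = 0
    have : (y + -v) i = y i + -(v i) := rfl
    rw [this]
    simp [hv, EuclideanSpace.single_apply]
    constructor
    · intro h; linarith
    · intro h; linarith
  rw [heq, measure_preimage_add_right]
  exact hsub

theorem reflect_int (d : ℕ) (f : EuclideanSpace ℝ (Fin d) → ℝ) :
    ∫ y in Bd d, f (-y) = ∫ y in Bd d, f y := by
  have h1 : ∀ g : EuclideanSpace ℝ (Fin d) → ℝ,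
      ∫ y in Bd d, g y = ∫ y, (Bd d).indicator g y := by
    intro g; rw [integral_indicator measurableSet_ball]
  rw [h1, h1, ← integral_neg_eq_self (fun y => (Bd d).indicator f y)]
  congr 1; ext y
  classical
  rw [Set.indicator_apply, Set.indicator_apply]
  have : y ∈ Bd d ↔ -y ∈ Bd d := by simp [mem_ball_zero_iff]
  by_cases h : y ∈ Bd d
  · rw [if_pos h, if_pos (this.mp h)]
  · rw [if_neg h, if_neg (fun hh => h (this.mpr hh))]

theorem volBd_pos (d : ℕ) : 0 < volume (Bd d) := Metric.measure_ball_pos _ _ one_pos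
theorem volBd_lt_top (d : ℕ) : volume (Bd d) < ⊤ := measure_ball_lt_top
theorem contProj (d : ℕ) (i : Fin d) : Continuous (fun y : EuclideanSpace ℝ (Fin d) => y i) :=
  (EuclideanSpace.proj (𝕜 := ℝ) i).continuous

theorem intgOn {d : ℕ} {X : Type*} [NormedAddCommGroup X] [NormedSpace ℝ X]
    {f : EuclideanSpace ℝ (Fin d) → X} (hf : Continuous f) :
    IntegrableOn f (Bd d) volume :=
  (hf.locallyIntegrable.integrableOn_isCompact (isCompact_closedBall 0 1)).mono_set
    Metric.ball_subset_closedBall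

theorem sinh_int_zero (d : ℕ) (i : Fin d) (c : ℝ) :
    ∫ y in Bd d, Real.sinh (c * y i) = 0 := by
  have h := reflect_int d (fun y => Real.sinh (c * y i))
  have h2 : ∀ y : EuclideanSpace ℝ (Fin d), Real.sinh (c * (-y) i) = -Real.sinh (c * y i) := by
    intro y
    have : (-y) i = -(y i) := rfl
    rw [this, mul_neg, Real.sinh_neg]
  simp_rw [h2] at h
  rw [integral_neg] at h
  linarith

theorem exp_int_eq_cosh (d : ℕ) (i : Fin d) (c : ℝ) :
    ∫ y in Bd d, Real.exp (c * y i) = ∫ y in Bd d, Real.cosh (c * y i) := by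
  have hint1 : IntegrableOn (fun y : EuclideanSpace ℝ (Fin d) => Real.cosh (c * y i)) (Bd d) :=
    intgOn (Real.continuous_cosh.comp ((continuous_const.mul (contProj d i))))
  have hint2 : IntegrableOn (fun y : EuclideanSpace ℝ (Fin d) => Real.sinh (c * y i)) (Bd d) :=
    intgOn (Real.continuous_sinh.comp ((continuous_const.mul (contProj d i))))
  have : ∀ y : EuclideanSpace ℝ (Fin d),
      Real.exp (c * y i) = Real.cosh (c * y i) + Real.sinh (c * y i) := by
    intro y; rw [Real.cosh_add_sinh]
  simp_rw [this]
  rw [integral_add hint1 hint2, sinh_int_zero, add_zero]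

theorem cosh_int_le (d : ℕ) (i : Fin d) {b c : ℝ} (h : |b| ≤ |c|) :
    ∫ y in Bd d, Real.cosh (b * y i) ≤ ∫ y in Bd d, Real.cosh (c * y i) := by
  refine setIntegral_mono_on
    (intgOn (Real.continuous_cosh.comp ((continuous_const.mul (contProj d i)))))
    (intgOn (Real.continuous_cosh.comp ((continuous_const.mul (contProj d i)))))
    measurableSet_ball ?_
  intro y _
  rw [Real.cosh_le_cosh, abs_mul, abs_mul]
  exact mul_le_mul_of_nonneg_right h (abs_nonneg _)

theorem cosh_int_lt (d : ℕ) (i : Fin d) {b c : ℝ} (h : |b| < |c|) :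
    ∫ y in Bd d, Real.cosh (b * y i) < ∫ y in Bd d, Real.cosh (c * y i) := by
  have hintb : IntegrableOn (fun y : EuclideanSpace ℝ (Fin d) => Real.cosh (b * y i)) (Bd d) :=
    intgOn (Real.continuous_cosh.comp ((continuous_const.mul (contProj d i))))
  have hintc : IntegrableOn (fun y : EuclideanSpace ℝ (Fin d) => Real.cosh (c * y i)) (Bd d) :=
    intgOn (Real.continuous_cosh.comp ((continuous_const.mul (contProj d i))))
  set F : EuclideanSpace ℝ (Fin d) → ℝ :=
    fun y => Real.cosh (c * y i) - Real.cosh (b * y i) with hF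
  have hFnn : ∀ y, 0 ≤ F y := by
    intro y
    have : Real.cosh (b * y i) ≤ Real.cosh (c * y i) := by
      rw [Real.cosh_le_cosh, abs_mul, abs_mul]
      exact mul_le_mul_of_nonneg_right h.le (abs_nonneg _)
    simpa [hF] using this
  have hFint : IntegrableOn F (Bd d) := hintc.sub hintb
  have hpos : 0 < ∫ y in Bd d, F y := by
    rw [setIntegral_pos_iff_support_of_nonneg_ae
      (Filter.Eventually.of_forall fun y => hFnn y) hFint]
    have hsub : Bd d \ {y : EuclideanSpace ℝ (Fin d) | y i = 0}
        ⊆ Function.support F ∩ Bd d := by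
      rintro y ⟨hyB, hy0⟩
      refine ⟨?_, hyB⟩
      have hyi : y i ≠ 0 := hy0
      have : Real.cosh (b * y i) < Real.cosh (c * y i) := by
        rw [Real.cosh_lt_cosh, abs_mul, abs_mul]
        exact mul_lt_mul_of_pos_right h (abs_pos.mpr hyi)
      simp only [Function.mem_support, hF]
      intro hzero; linarith [hzero]
    refine lt_of_lt_of_le ?_ (measure_mono hsub)
    rw [measure_diff_null (slice_null d i 0)]
    exact volBd_pos d
  have := integral_sub hintc hintb
  simp only [hF] at hpos
  rw [integral_sub hintc hintb] at hpos
  linarith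


theorem int_ofReal {d : ℕ} {g : EuclideanSpace ℝ (Fin d) → ℝ} (hg : IntegrableOn g (Bd d)) :
    ∫ y in Bd d, ((g y : ℝ) : ℂ) = ((∫ y in Bd d, g y : ℝ) : ℂ) := by
  rw [show (fun y => ((g y : ℝ):ℂ)) = (fun y => Complex.ofRealCLM (g y)) from rfl,
    ContinuousLinearMap.integral_comp_comm _ hg]
  rfl

/-- `ψ_λ(ξ) = |B(0,1)|⁻¹ ∫_{B(0,1)} e^{-iλ ξ·y} dy`. -/
noncomputable def psiFn (d : ℕ) (lam : ℂ) (ξ : EuclideanSpace ℝ (Fin d)) : ℂ :=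
  (((volume (Metric.ball (0 : EuclideanSpace ℝ (Fin d)) 1)).toReal : ℂ))⁻¹ *
    ∫ y in Metric.ball (0 : EuclideanSpace ℝ (Fin d)) 1,
      Complex.exp (-(Complex.I * lam * ((inner ℝ ξ y : ℝ) : ℂ)))

theorem master (d : ℕ) (i : Fin d) (t a : ℝ) (ht : 0 < t) (ha : 0 < a)
    (lam : ℂ) (hstrip : |lam.im| ≤ a)
    (h1 : lam ≠ Complex.I * (a : ℂ)) (h2 : lam ≠ -(Complex.I * (a : ℂ))) :
    ‖psiFn d lam (t • EuclideanSpace.single i 1)‖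
      < (psiFn d (Complex.I * (a : ℂ)) (t • EuclideanSpace.single i 1)).re := by
  set ν : ℝ := lam.im with hν
  set μ : ℝ := lam.re with hμ
  set x : ℝ := (volume (Bd d)).toReal with hx
  have hxpos : 0 < x := ENNReal.toReal_pos (volBd_pos d).ne' (volBd_lt_top d).ne
  have hin : ∀ y : EuclideanSpace ℝ (Fin d),
      (inner ℝ (t • EuclideanSpace.single i (1:ℝ)) y : ℝ) = t * y i := by
    intro y
    rw [real_inner_smul_left, EuclideanSpace.inner_single_left]
    simp
  set f : EuclideanSpace ℝ (Fin d) → ℂ :=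
    fun y => Complex.exp (-(Complex.I * lam * ((t * y i : ℝ) : ℂ))) with hf
  have hfcont : Continuous f := by
    apply Complex.continuous_exp.comp
    exact (continuous_const.mul ((Complex.continuous_ofReal.comp
      ((continuous_const.mul (contProj d i)))))).neg
  have hfint : IntegrableOn f (Bd d) := intgOn hfcont
  have hpsi : psiFn d lam (t • EuclideanSpace.single i 1) = (x : ℂ)⁻¹ * ∫ y in Bd d, f y := by
    unfold psiFn
    simp_rw [hin]
    rfl
  have hnorm : ∀ y : EuclideanSpace ℝ (Fin d),
      ‖f y‖ = Real.exp ((ν * t) * y i) := by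
    intro y
    rw [hf, Complex.norm_exp]
    congr 1
    simp [Complex.mul_re, Complex.mul_im]
    ring
  have hsplit : ∀ s : ℝ, Complex.exp (-(Complex.I * lam * (s : ℂ)))
      = (Real.exp (ν * s) : ℂ) * Complex.exp (-(Complex.I * (μ : ℂ) * (s : ℂ))) := by
    intro s
    rw [Complex.ofReal_exp, ← Complex.exp_add]
    congr 1
    rw [← Complex.re_add_im lam, ← hμ, ← hν]
    push_cast
    ring_nf
    rw [Complex.I_sq]
    ring
  have hexpa_int : IntegrableOn
      (fun y : EuclideanSpace ℝ (Fin d) => Real.exp ((a * t) * y i)) (Bd d) :=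
    intgOn (Real.continuous_exp.comp (continuous_const.mul (contProj d i)))
  have hexp_int : IntegrableOn
      (fun y : EuclideanSpace ℝ (Fin d) => Real.exp ((ν * t) * y i)) (Bd d) :=
    intgOn (Real.continuous_exp.comp (continuous_const.mul (contProj d i)))
  have hRHS : (psiFn d (Complex.I * (a : ℂ)) (t • EuclideanSpace.single i 1)).re
      = x⁻¹ * ∫ y in Bd d, Real.exp ((a * t) * y i) := by
    unfold psiFn
    simp_rw [hin]
    have : ∀ y : EuclideanSpace ℝ (Fin d),
        Complex.exp (-(Complex.I * (Complex.I * (a:ℂ)) * ((t * y i : ℝ) : ℂ)))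
          = ((Real.exp ((a*t) * y i) : ℝ) : ℂ) := by
      intro y
      rw [Complex.ofReal_exp]
      congr 1
      push_cast
      ring_nf
      rw [Complex.I_sq]
      ring
    simp_rw [this]
    rw [int_ofReal hexpa_int, ← Complex.ofReal_inv, ← Complex.ofReal_mul, Complex.ofReal_re]
  rw [hpsi, hRHS, norm_mul]
  have hxabs : ‖((x:ℂ)⁻¹)‖ = x⁻¹ := by
    rw [norm_inv, Complex.norm_real, Real.norm_eq_abs, abs_of_pos hxpos]
  rw [hxabs]
  have key : ‖∫ y in Bd d, f y‖ < ∫ y in Bd d, Real.exp ((a * t) * y i) := by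
    rw [exp_int_eq_cosh]
    have hat : |ν * t| ≤ |a * t| := by
      rw [abs_mul, abs_mul, abs_of_pos ht, abs_of_pos ha]
      exact mul_le_mul_of_nonneg_right hstrip ht.le
    by_cases hμ0 : μ = 0
    · -- purely imaginary case
      have hlam : lam = (ν : ℂ) * Complex.I := by
        rw [← Complex.re_add_im lam, ← hμ, ← hν, hμ0]
        simp
      have hstrict : |ν| < a := by
        rcases lt_or_eq_of_le hstrip with h | h
        · exact h
        · exfalso
          rcases (abs_eq (le_of_lt ha)).mp h with h' | h'
          · exact h1 (by rw [hlam, h']; push_cast; ring)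
          · exact h2 (by rw [hlam, h']; push_cast; ring)
      have hfr : ∀ y : EuclideanSpace ℝ (Fin d),
          f y = ((Real.exp ((ν * t) * y i) : ℝ) : ℂ) := by
        intro y
        simp only [hf]
        rw [hsplit]
        have h0 : -(Complex.I * (μ:ℂ) * ((t * y i : ℝ):ℂ)) = 0 := by rw [hμ0]; simp
        rw [h0, Complex.exp_zero, mul_one, mul_assoc]
      simp_rw [hfr]
      rw [int_ofReal hexp_int, Complex.norm_real, Real.norm_eq_abs]
      have hnn : 0 ≤ ∫ y in Bd d, Real.exp ((ν * t) * y i) :=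
        setIntegral_nonneg measurableSet_ball (fun y _ => (Real.exp_pos _).le)
      rw [_root_.abs_of_nonneg hnn, exp_int_eq_cosh]
      apply cosh_int_lt
      rw [abs_mul, abs_mul, abs_of_pos ht, abs_of_pos ha]
      exact mul_lt_mul_of_pos_right hstrict ht
    · -- case μ ≠ 0 : strict triangle inequality
      set Iν : ℝ := ∫ y in Bd d, Real.exp ((ν * t) * y i) with hIν
      have hIle : Iν ≤ ∫ y in Bd d, Real.cosh ((a*t) * y i) := by
        rw [hIν, exp_int_eq_cosh]
        exact cosh_int_le d i hat
      have hA_le : ‖∫ y in Bd d, f y‖ ≤ Iν := by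
        refine le_trans (norm_integral_le_integral_norm f) ?_
        rw [hIν]
        refine le_of_eq (setIntegral_congr_fun measurableSet_ball ?_)
        intro y _
        show ‖f y‖ = Real.exp ((ν * t) * y i)
        rw [hnorm]
      have hIν_pos : 0 < Iν := by
        rw [hIν, setIntegral_pos_iff_support_of_nonneg_ae
          (Filter.Eventually.of_forall (fun y => (Real.exp_pos _).le)) hexp_int]
        have hsupp : Function.support (fun y : EuclideanSpace ℝ (Fin d) =>
            Real.exp ((ν * t) * y i)) ∩ Bd d = Bd d := by
          ext y; simp [Function.mem_support, Real.exp_ne_zero]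
        rw [hsupp]; exact volBd_pos d
      have hne : ‖∫ y in Bd d, f y‖ ≠ Iν := by
        intro heq
        set c : ℂ := ∫ y in Bd d, f y with hc
        have hc0 : c ≠ 0 := by
          intro h0
          rw [h0] at heq
          simp at heq
          linarith
        have habsc : 0 < ‖c‖ := norm_pos_iff.mpr hc0
        set u : ℂ := c / (‖c‖ : ℂ) with hu
        have hu_abs : ‖u‖ = 1 := by
          rw [hu, norm_div, Complex.norm_real, Real.norm_eq_abs, abs_of_pos habsc, div_self habsc.ne']
        have hu0 : u ≠ 0 := by
          intro h; rw [h] at hu_abs; simp at hu_abs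
        have hcu : (starRingEnd ℂ) u * c = (‖c‖ : ℂ) := by
          rw [hu, map_div₀, Complex.conj_ofReal, div_mul_eq_mul_div, mul_comm,
            Complex.mul_conj, Complex.normSq_eq_norm_sq]
          push_cast
          rw [sq]
          field_simp
        have hu_conj : u * (starRingEnd ℂ) u = 1 := by
          rw [Complex.mul_conj, Complex.normSq_eq_norm_sq, hu_abs]; norm_num
        set φ : EuclideanSpace ℝ (Fin d) → ℝ :=
          fun y => Real.exp ((ν * t) * y i) - ((starRingEnd ℂ) u * f y).re with hφ
        have habs_uf : ∀ y, ‖(starRingEnd ℂ) u * f y‖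
            = Real.exp ((ν * t) * y i) := by
          intro y
          rw [norm_mul, Complex.norm_conj, hu_abs, one_mul, hnorm]
        have hφnn : ∀ y, 0 ≤ φ y := by
          intro y
          have h := Complex.re_le_norm ((starRingEnd ℂ) u * f y)
          rw [habs_uf y] at h
          simp only [hφ]
          linarith
        have huf_int : IntegrableOn (fun y => (starRingEnd ℂ) u * f y) (Bd d) :=
          hfint.const_mul _
        have hre_int : IntegrableOn (fun y => ((starRingEnd ℂ) u * f y).re) (Bd d) :=
          huf_int.re
        have hφint : IntegrableOn φ (Bd d) := hexp_int.sub hre_int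
        have hφ0 : ∫ y in Bd d, φ y = 0 := by
          simp only [hφ]
          rw [integral_sub hexp_int hre_int]
          have hrei : ∫ y in Bd d, ((starRingEnd ℂ) u * f y).re
              = (∫ y in Bd d, (starRingEnd ℂ) u * f y).re := by
            rw [show (fun y => ((starRingEnd ℂ) u * f y).re)
                = (fun y => Complex.reCLM ((starRingEnd ℂ) u * f y)) from rfl,
              ContinuousLinearMap.integral_comp_comm _ huf_int]
            rfl
          rw [hrei, integral_const_mul, ← hc, hcu, Complex.ofReal_re, ← hIν, heq]
          ring
        have hφae := (integral_eq_zero_iff_of_nonneg_ae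
          (Filter.Eventually.of_forall hφnn) hφint).mp hφ0
        set T : Set (EuclideanSpace ℝ (Fin d)) :=
          {y | Complex.exp (-(Complex.I * (μ:ℂ) * ((t * y i : ℝ) : ℂ))) = u} with hT
        have hmem : ∀ y, φ y = 0 → y ∈ T := by
          intro y hy
          set z := (starRingEnd ℂ) u * f y with hz
          have hzre : z.re = Real.exp ((ν*t) * y i) := by
            simp only [hφ] at hy; linarith
          have hzabs : ‖z‖ = Real.exp ((ν*t)*y i) := habs_uf y
          have him : z.im = 0 := by
            have h2 : ‖z‖^2 = z.re^2 + z.im^2 := by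
              rw [Complex.sq_norm, Complex.normSq_apply]; ring
            have h3 : z.im ^ 2 = 0 := by
              rw [hzabs, hzre] at h2; linarith
            exact pow_eq_zero_iff two_ne_zero |>.mp h3
          have hzeq : z = ((Real.exp ((ν*t)*y i) : ℝ) : ℂ) := by
            apply Complex.ext
            · rw [hzre, Complex.ofReal_re]
            · rw [him, Complex.ofReal_im]
          have hfy : f y = ((Real.exp (ν * (t * y i)) : ℝ):ℂ)
              * Complex.exp (-(Complex.I * (μ:ℂ) * ((t*y i : ℝ):ℂ))) := by
            simp only [hf]; rw [hsplit]
          have hE : ((Real.exp (ν * (t*y i)) : ℝ):ℂ) ≠ 0 := by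
            exact_mod_cast (Real.exp_pos _).ne'
          have hEE : (ν*t) * y i = ν * (t * y i) := by ring
          set w := Complex.exp (-(Complex.I * (μ:ℂ) * ((t*y i:ℝ):ℂ))) with hw
          have hzz : (starRingEnd ℂ) u * (((Real.exp (ν*(t*y i)):ℝ):ℂ) * w)
              = ((Real.exp (ν*(t*y i)):ℝ):ℂ) := by
            rw [← hfy, ← hz, hzeq, hEE]
          have h3 : ((Real.exp (ν*(t*y i)):ℝ):ℂ) * ((starRingEnd ℂ) u * w)
              = (starRingEnd ℂ) u * (((Real.exp (ν*(t*y i)):ℝ):ℂ) * w) := by ring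
          rw [hzz] at h3
          have h4 : (starRingEnd ℂ) u * w = 1 := by
            apply mul_left_cancel₀ hE
            rw [h3, mul_one]
          have h5 : w = u := by
            calc w = (u * (starRingEnd ℂ) u) * w := by rw [hu_conj, one_mul]
              _ = u * ((starRingEnd ℂ) u * w) := by ring
              _ = u := by rw [h4, mul_one]
          exact h5
        set S : Set ℝ := {s | Complex.exp (-(Complex.I * (μ:ℂ) * (s:ℂ))) = u} with hS
        have hScount : S.Countable := by
          set w0 := Complex.log u with hw0
          apply Set.Countable.mono ?_ (Set.countable_range
            (fun n : ℤ => -((w0.im + n * (2*Real.pi)) / μ)))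
          intro s hs
          have hus : Complex.exp (-(Complex.I * (μ:ℂ) * (s:ℂ))) = Complex.exp w0 := by
            rw [hw0, Complex.exp_log hu0]; exact hs
          rcases Complex.exp_eq_exp_iff_exists_int.mp hus with ⟨n, hn⟩
          refine ⟨n, ?_⟩
          have himeq := congrArg Complex.im hn
          simp [Complex.mul_im, Complex.mul_re, Complex.add_im] at himeq
          field_simp
          linarith
        have hTnull : volume T = 0 := by
          have hsub : T ⊆ ⋃ s ∈ {s : ℝ | t * s ∈ S},
              {y : EuclideanSpace ℝ (Fin d) | y i = s} := by
            intro y hy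
            refine Set.mem_biUnion ?_ rfl
            exact hy
          refine measure_mono_null hsub ?_
          refine (measure_biUnion_null_iff ?_).mpr (fun s _ => slice_null d i s)
          have : {s : ℝ | t * s ∈ S} = (fun s => t * s) ⁻¹' S := rfl
          rw [this]
          exact hScount.preimage (mul_right_injective₀ ht.ne')
        have hTae : ∀ᵐ y ∂(volume.restrict (Bd d)), y ∈ T := by
          filter_upwards [hφae] with y hy using hmem y hy
        have h0 : volume.restrict (Bd d) Tᶜ = 0 := ae_iff.mp hTae
        have hBle : volume (Bd d) ≤ 0 := by
          calc volume (Bd d) = volume.restrict (Bd d) Set.univ :=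
                (Measure.restrict_apply_univ _).symm
            _ = volume.restrict (Bd d) (T ∪ Tᶜ) := by rw [Set.union_compl_self]
            _ ≤ volume.restrict (Bd d) T + volume.restrict (Bd d) Tᶜ := measure_union_le _ _
            _ ≤ volume T + 0 :=
                add_le_add (Measure.le_iff'.mp Measure.restrict_le_self T) (le_of_eq h0)
            _ = 0 := by rw [hTnull, add_zero]
        exact absurd hBle (by simpa using (volBd_pos d).not_ge)
      calc ‖∫ y in Bd d, f y‖ < Iν := lt_of_le_of_ne hA_le hne
        _ ≤ _ := hIle
  exact mul_lt_mul_of_pos_left key (by positivity)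

/-- For `λ` in the strip `|Im λ| ≤ a` with `λ ≠ ± i a`, one has `|ψ_λ(t e₁)| < ψ_{ia}(t e₁)`
(the latter being a positive real number, expressed here via its real part). -/
theorem statement3 (d : ℕ) (hd : 1 ≤ d) (t a : ℝ) (ht : 0 < t) (ha : 0 < a)
    (lam : ℂ) (hstrip : |lam.im| ≤ a)
    (h1 : lam ≠ Complex.I * (a : ℂ)) (h2 : lam ≠ -(Complex.I * (a : ℂ))) :
    ‖psiFn d lam (t • EuclideanSpace.single (⟨0, by omega⟩ : Fin d) 1)‖
      < (psiFn d (Complex.I * (a : ℂ)) (t • EuclideanSpace.single (⟨0, by omega⟩ : Fin d) 1)).re :=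
  master d ⟨0, by omega⟩ t a ht ha lam hstrip h1 h2
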